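/- Let (u₁,…,uₙ) and (v₁,…,vₙ) be decreasing sequences of positive real numbers such that u_{i₀} ≠ v_{i₀} for some i₀ ∈ {1,…,n}, and such that Π_{i=1}^j v_i ≤ Π_{i=1}^j u_i for all j ∈ {1,…,n}. Then Σ_{i=1}^n v_i < Σ_{i=1}^n u_i. -/

import Mathlib

open Finset

private lemma abel_nonneg (n : ℕ) (f g : ℕ → ℝ)
    (hf : ∀ i j, i ≤ j → f j ≤ f i) (hf0 : ∀ i, 0 ≤ f i)
    (hG : ∀ j, j ≤ n → 0 ≤ ∑ i ∈ Finset.range j, g i) :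
    0 ≤ ∑ i ∈ Finset.range n, f i * g i := by
  have h := Finset.sum_range_by_parts f g n
  simp only [smul_eq_mul] at h
  rw [h]
  have h1 : 0 ≤ f (n - 1) * ∑ i ∈ range n, g i :=
    mul_nonneg (hf0 _) (hG n le_rfl)
  have h2 : ∑ i ∈ range (n - 1), (f (i + 1) - f i) * ∑ j ∈ range (i + 1), g j ≤ 0 := by
    apply Finset.sum_nonpos
    intro i hi
    rw [Finset.mem_range] at hi
    apply mul_nonpos_of_nonpos_of_nonneg
    · linarith [hf i (i + 1) (Nat.le_succ i)]
    · exact hG (i + 1) (by omega)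
  linarith

private lemma filter_sum_eq {n j : ℕ} (hj : j ≤ n) (F : ℕ → ℝ) :
    ∑ i ∈ Finset.univ.filter (fun i : Fin n => (i : ℕ) < j), F (i : ℕ)
      = ∑ k ∈ Finset.range j, F k := by
  rw [Finset.sum_filter, Fin.sum_univ_eq_sum_range (fun k => if k < j then F k else 0) n,
    ← Finset.sum_filter]
  congr 1
  ext k
  simp only [Finset.mem_filter, Finset.mem_range]
  omega

theorem stmt_12 (n : ℕ) (u v : Fin n → ℝ)
    (hu0 : ∀ i, 0 < u i) (hv0 : ∀ i, 0 < v i)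
    (hu : Antitone u) (hv : Antitone v)
    (hne : ∃ i, u i ≠ v i)
    (hprod : ∀ j : ℕ, j ≤ n →
      ∏ i ∈ Finset.univ.filter (fun i : Fin n => (i : ℕ) < j), v i
        ≤ ∏ i ∈ Finset.univ.filter (fun i : Fin n => (i : ℕ) < j), u i) :
    ∑ i, v i < ∑ i, u i := by
  set d : Fin n → ℝ := fun i => Real.log (u i) - Real.log (v i) with hd
  -- pointwise key inequality
  have key : ∀ i : Fin n, v i * d i ≤ u i - v i := by
    intro i
    have hx : Real.exp (d i) = u i / v i := by
      rw [hd]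
      rw [Real.exp_sub, Real.exp_log (hu0 i), Real.exp_log (hv0 i)]
    have h1 : d i + 1 ≤ u i / v i := hx ▸ Real.add_one_le_exp (d i)
    have hvpos := hv0 i
    rw [le_div_iff₀ hvpos] at h1
    nlinarith
  have keylt : ∀ i : Fin n, u i ≠ v i → v i * d i < u i - v i := by
    intro i hne
    have hx : Real.exp (d i) = u i / v i := by
      rw [hd]
      rw [Real.exp_sub, Real.exp_log (hu0 i), Real.exp_log (hv0 i)]
    have hd0 : d i ≠ 0 := by
      simp only [hd, sub_ne_zero]
      exact fun h => hne (Real.log_injOn_pos (Set.mem_Ioi.mpr (hu0 i))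
        (Set.mem_Ioi.mpr (hv0 i)) h)
    have h1 : d i + 1 < u i / v i := hx ▸ Real.add_one_lt_exp hd0
    have hvpos := hv0 i
    rw [lt_div_iff₀ hvpos] at h1
    nlinarith
  -- sum of v i * d i is nonneg by Abel summation
  set V : ℕ → ℝ := fun k => if h : k < n then v ⟨k, h⟩ else 0 with hV
  set D : ℕ → ℝ := fun k => if h : k < n then d ⟨k, h⟩ else 0 with hD
  have hVanti : ∀ i j, i ≤ j → V j ≤ V i := by
    intro i j hij
    simp only [hV]
    split_ifs with h1 h2 h2
    · exact hv (by exact_mod_cast hij)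
    · omega
    · exact (hv0 _).le
    · exact le_refl 0
  have hV0 : ∀ i, 0 ≤ V i := by
    intro i
    simp only [hV]
    split_ifs with h
    · exact (hv0 _).le
    · exact le_refl 0
  have hG : ∀ j, j ≤ n → 0 ≤ ∑ i ∈ Finset.range j, D i := by
    intro j hj
    have hDsum : ∑ i ∈ Finset.range j, D i
        = ∑ i ∈ Finset.univ.filter (fun i : Fin n => (i : ℕ) < j), d i := by
      rw [← filter_sum_eq hj D]
      apply Finset.sum_congr rfl
      intro i _
      simp only [hD, dif_pos i.isLt]
    rw [hDsum, hd]
    simp only [Finset.sum_sub_distrib]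
    have hlogu : ∑ i ∈ Finset.univ.filter (fun i : Fin n => (i : ℕ) < j), Real.log (u i)
        = Real.log (∏ i ∈ Finset.univ.filter (fun i : Fin n => (i : ℕ) < j), u i) :=
      (Real.log_prod (fun i _ => (hu0 i).ne')).symm
    have hlogv : ∑ i ∈ Finset.univ.filter (fun i : Fin n => (i : ℕ) < j), Real.log (v i)
        = Real.log (∏ i ∈ Finset.univ.filter (fun i : Fin n => (i : ℕ) < j), v i) :=
      (Real.log_prod (fun i _ => (hv0 i).ne')).symm
    rw [hlogu, hlogv, sub_nonneg]
    exact Real.log_le_log (Finset.prod_pos (fun i _ => hv0 i)) (hprod j hj)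
  have habel : 0 ≤ ∑ i : Fin n, v i * d i := by
    have : ∑ i : Fin n, v i * d i = ∑ k ∈ Finset.range n, V k * D k := by
      rw [← Fin.sum_univ_eq_sum_range (fun k => V k * D k) n]
      apply Finset.sum_congr rfl
      intro i _
      simp only [hV, hD, dif_pos i.isLt]
    rw [this]
    exact abel_nonneg n V D hVanti hV0 hG
  -- strict sum inequality
  obtain ⟨i₀, hi₀⟩ := hne
  have hstrict : ∑ i : Fin n, v i * d i < ∑ i : Fin n, (u i - v i) := by
    apply Finset.sum_lt_sum (fun i _ => key i)
    exact ⟨i₀, Finset.mem_univ i₀, keylt i₀ hi₀⟩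
  have : 0 < ∑ i : Fin n, (u i - v i) := lt_of_le_of_lt habel hstrict
  rw [Finset.sum_sub_distrib] at this
  linarith
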